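/- Let L > 0, ξ = √(L²+4), t₁ = L+2+ξ, t₂ = L+2−ξ, φ_n = t₁^n + t₂^n, ψ_n = t₁^n − t₂^n. Define r_{−1} = −(L+1) and r_n = −(α̃_n + β̃_n/r_{n−1}) where α̃_n = −1 + ψ_{n+2}/(2ψ_{n+1}) + 2L·ψ_{n+1}/ψ_{n+2} and β̃_n = L·ψ_n·ψ_{n+2}/ψ_{n+1}² for n ≥ 1, β̃_0 = L(L+2). Then for all n ≥ 0: r_n = −(ψ_{n+1}/ψ_{n+2})·(Lψ_{n+2} + ξφ_{n+2})/(Lψ_{n+1} + ξφ_{n+1}). -/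

import Mathlib

set_option maxHeartbeats 1000000
set_option maxRecDepth 10000

lemma key_step (L s a b : ℝ) (hs : s ^ 2 = L ^ 2 + 4)
    (h1 : a - b ≠ 0)
    (h2 : (L+2+s) * a - (L+2-s) * b ≠ 0)
    (h3 : (L+2+s)^2 * a - (L+2-s)^2 * b ≠ 0)
    (d1 : L * (a - b) + s * (a + b) ≠ 0)
    (d2 : L * ((L+2+s) * a - (L+2-s) * b) + s * ((L+2+s) * a + (L+2-s) * b) ≠ 0) :
    -((-1 + ((L+2+s)^2 * a - (L+2-s)^2 * b) / (2 * ((L+2+s) * a - (L+2-s) * b)) +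
        2 * L * ((L+2+s) * a - (L+2-s) * b) / ((L+2+s)^2 * a - (L+2-s)^2 * b)) +
      (L * (a - b) * ((L+2+s)^2 * a - (L+2-s)^2 * b) / ((L+2+s) * a - (L+2-s) * b) ^ 2) /
        (-((a - b) / ((L+2+s) * a - (L+2-s) * b)) *
          (L * ((L+2+s) * a - (L+2-s) * b) + s * ((L+2+s) * a + (L+2-s) * b)) /
          (L * (a - b) + s * (a + b)))) =
    -(((L+2+s) * a - (L+2-s) * b) / ((L+2+s)^2 * a - (L+2-s)^2 * b)) *
      (L * ((L+2+s)^2 * a - (L+2-s)^2 * b) + s * ((L+2+s)^2 * a + (L+2-s)^2 * b)) /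
      (L * ((L+2+s) * a - (L+2-s) * b) + s * ((L+2+s) * a + (L+2-s) * b)) := by
  have e1 : (L * (a - b) * ((L+2+s)^2 * a - (L+2-s)^2 * b) / ((L+2+s) * a - (L+2-s) * b) ^ 2) /
        (-((a - b) / ((L+2+s) * a - (L+2-s) * b)) *
          (L * ((L+2+s) * a - (L+2-s) * b) + s * ((L+2+s) * a + (L+2-s) * b)) /
          (L * (a - b) + s * (a + b))) =
      -(L * ((L+2+s)^2 * a - (L+2-s)^2 * b) * (L * (a - b) + s * (a + b)) /
        (((L+2+s) * a - (L+2-s) * b) *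
          (L * ((L+2+s) * a - (L+2-s) * b) + s * ((L+2+s) * a + (L+2-s) * b)))) := by
    rw [div_div_div_eq]
    rw [show ((L+2+s) * a - (L+2-s) * b) ^ 2 *
        (-((a - b) / ((L+2+s) * a - (L+2-s) * b)) *
          (L * ((L+2+s) * a - (L+2-s) * b) + s * ((L+2+s) * a + (L+2-s) * b))) =
        -((a - b) * (((L+2+s) * a - (L+2-s) * b) *
          (L * ((L+2+s) * a - (L+2-s) * b) + s * ((L+2+s) * a + (L+2-s) * b)))) by
      field_simp]
    rw [div_neg, neg_inj, div_eq_div_iff (mul_ne_zero h1 (mul_ne_zero h2 d2)) (mul_ne_zero h2 d2)]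
    ring
  rw [e1]
  field_simp
  linear_combination ((-8)*s*b^3 + (8)*s*a*b^2 + (8)*s*a^2*b + (-8)*s*a^3 + (12)*s^2*b^3 + (-20)*s^2*a*b^2 + (20)*s^2*a^2*b + (-12)*s^2*a^3 + (-6)*s^3*b^3 + (14)*s^3*a*b^2 + (14)*s^3*a^2*b + (-6)*s^3*a^3 + (1)*s^4*b^3 + (-3)*s^4*a*b^2 + (3)*s^4*a^2*b + (-1)*s^4*a^3 + (8)*L*b^3 + (-24)*L*a*b^2 + (24)*L*a^2*b + (-8)*L*a^3 + (-24)*L*s*b^3 + (24)*L*s*a*b^2 + (24)*L*s*a^2*b + (-24)*L*s*a^3 + (18)*L*s^2*b^3 + (-14)*L*s^2*a*b^2 + (14)*L*s^2*a^2*b + (-18)*L*s^2*a^3 + (-4)*L*s^3*b^3 + (4)*L*s^3*a*b^2 + (4)*L*s^3*a^2*b + (-4)*L*s^3*a^3 + (12)*L^2*b^3 + (-36)*L^2*a*b^2 + (36)*L^2*a^2*b + (-12)*L^2*a^3 + (-18)*L^2*s*b^3 + (18)*L^2*s*a*b^2 + (18)*L^2*s*a^2*b + (-18)*L^2*s*a^3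 + (6)*L^2*s^2*b^3 + (-2)*L^2*s^2*a*b^2 + (2)*L^2*s^2*a^2*b + (-6)*L^2*s^2*a^3 + (6)*L^3*b^3 + (-18)*L^3*a*b^2 + (18)*L^3*a^2*b + (-6)*L^3*a^3 + (-4)*L^3*s*b^3 + (4)*L^3*s*a*b^2 + (4)*L^3*s*a^2*b + (-4)*L^3*s*a^3 + (1)*L^4*b^3 + (-3)*L^4*a*b^2 + (3)*L^4*a^2*b + (-1)*L^4*a^3) * hs

theorem r_closed_form (L : ℝ) (hL : 0 < L)
    (r : ℤ → ℝ)
    (hrm1 : r (-1) = -(L + 1))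
    (hrec : ∀ n : ℕ, r n =
      -(((-1) + ((L + 2 + Real.sqrt (L ^ 2 + 4)) ^ (n + 2) - (L + 2 - Real.sqrt (L ^ 2 + 4)) ^ (n + 2)) /
            (2 * ((L + 2 + Real.sqrt (L ^ 2 + 4)) ^ (n + 1) - (L + 2 - Real.sqrt (L ^ 2 + 4)) ^ (n + 1))) +
          2 * L * ((L + 2 + Real.sqrt (L ^ 2 + 4)) ^ (n + 1) - (L + 2 - Real.sqrt (L ^ 2 + 4)) ^ (n + 1)) /
            ((L + 2 + Real.sqrt (L ^ 2 + 4)) ^ (n + 2) - (L + 2 - Real.sqrt (L ^ 2 + 4)) ^ (n + 2))) +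
        (if n = 0 then L * (L + 2) else
          L * ((L + 2 + Real.sqrt (L ^ 2 + 4)) ^ n - (L + 2 - Real.sqrt (L ^ 2 + 4)) ^ n) *
            ((L + 2 + Real.sqrt (L ^ 2 + 4)) ^ (n + 2) - (L + 2 - Real.sqrt (L ^ 2 + 4)) ^ (n + 2)) /
            ((L + 2 + Real.sqrt (L ^ 2 + 4)) ^ (n + 1) - (L + 2 - Real.sqrt (L ^ 2 + 4)) ^ (n + 1)) ^ 2) /
          r (n - 1))) :
    let ξ := Real.sqrt (L ^ 2 + 4)
    let t₁ := L + 2 + ξ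
    let t₂ := L + 2 - ξ
    let φ : ℕ → ℝ := fun n => t₁ ^ n + t₂ ^ n
    let ψ : ℕ → ℝ := fun n => t₁ ^ n - t₂ ^ n
    ∀ n : ℕ, r n = -(ψ (n + 1) / ψ (n + 2)) *
      (L * ψ (n + 2) + ξ * φ (n + 2)) / (L * ψ (n + 1) + ξ * φ (n + 1)) := by
  show ∀ n : ℕ, r n = -(((L + 2 + Real.sqrt (L ^ 2 + 4)) ^ (n+1) - (L + 2 - Real.sqrt (L ^ 2 + 4)) ^ (n+1)) /
        ((L + 2 + Real.sqrt (L ^ 2 + 4)) ^ (n+2) - (L + 2 - Real.sqrt (L ^ 2 + 4)) ^ (n+2))) *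
      (L * ((L + 2 + Real.sqrt (L ^ 2 + 4)) ^ (n+2) - (L + 2 - Real.sqrt (L ^ 2 + 4)) ^ (n+2)) +
        Real.sqrt (L ^ 2 + 4) * ((L + 2 + Real.sqrt (L ^ 2 + 4)) ^ (n+2) + (L + 2 - Real.sqrt (L ^ 2 + 4)) ^ (n+2))) /
      (L * ((L + 2 + Real.sqrt (L ^ 2 + 4)) ^ (n+1) - (L + 2 - Real.sqrt (L ^ 2 + 4)) ^ (n+1)) +
        Real.sqrt (L ^ 2 + 4) * ((L + 2 + Real.sqrt (L ^ 2 + 4)) ^ (n+1) + (L + 2 - Real.sqrt (L ^ 2 + 4)) ^ (n+1)))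
  set s := Real.sqrt (L ^ 2 + 4) with hsdef
  have hs : s ^ 2 = L ^ 2 + 4 := Real.sq_sqrt (by positivity)
  have hspos : 0 < s := Real.sqrt_pos.mpr (by positivity)
  have hslt : s < L + 2 := by
    nlinarith [hs, hspos]
  have ht2 : (0:ℝ) < L + 2 - s := by linarith
  have ht12 : L + 2 - s < L + 2 + s := by linarith
  have hψpos : ∀ k : ℕ, k ≠ 0 → (0:ℝ) < (L + 2 + s) ^ k - (L + 2 - s) ^ k := by
    intro k hk
    exact sub_pos.mpr (pow_lt_pow_left₀ ht12 ht2.le hk)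
  have hDpos : ∀ k : ℕ, (0:ℝ) < L * ((L + 2 + s) ^ k - (L + 2 - s) ^ k) +
      s * ((L + 2 + s) ^ k + (L + 2 - s) ^ k) := by
    intro k
    have h1 : (0:ℝ) ≤ (L + 2 + s) ^ k - (L + 2 - s) ^ k :=
      sub_nonneg.mpr (pow_le_pow_left₀ ht2.le ht12.le k)
    have h2 : (0:ℝ) < (L + 2 + s) ^ k + (L + 2 - s) ^ k := by positivity
    nlinarith
  intro n
  induction n with
  | zero =>
    have h0 := hrec 0
    rw [if_pos rfl, show ((0:ℕ):ℤ) - 1 = -1 by norm_num, hrm1] at h0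
    rw [h0]
    have hL1 : L + 1 ≠ 0 := by positivity
    have hL1' : -(L+1) ≠ 0 := neg_ne_zero.mpr hL1
    have hL1'' : (-1:ℝ) + -L ≠ 0 := by intro h; apply hL1; linarith
    have e1 : ∀ x : ℝ, x ^ (0+1) = x := fun x => pow_one x
    have e2 : ∀ x : ℝ, x ^ (0+2) = x ^ 2 := fun x => rfl
    rw [e1, e1, e2, e2]
    have hp1 : (L + 2 + s) - (L + 2 - s) ≠ 0 := by
      have := hψpos 1 one_ne_zero; simp only [pow_one] at this; exact this.ne'
    have hp2 : (L + 2 + s) ^ 2 - (L + 2 - s) ^ 2 ≠ 0 := (hψpos 2 two_ne_zero).ne'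
    have hd1 : L * ((L + 2 + s) - (L + 2 - s)) + s * ((L + 2 + s) + (L + 2 - s)) ≠ 0 := by
      have := hDpos 1; simp only [pow_one] at this; exact this.ne'
    field_simp
    linear_combination ((16)*s^3 + (16)*L*s^3) * hs
  | succ n ih =>
    have h0 := hrec (n + 1)
    rw [if_neg (by omega : ¬(n + 1 = 0))] at h0
    push_cast at h0 ⊢
    rw [add_sub_cancel_right, ih] at h0
    rw [h0]
    have ea : ∀ x : ℝ, x ^ (n+1+2) = x ^ 2 * x ^ (n+1) := fun x => by ring
    have eb : ∀ x : ℝ, x ^ (n+1+1) = x * x ^ (n+1) := fun x => by ring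
    have ec : ∀ x : ℝ, x ^ (n+2) = x * x ^ (n+1) := fun x => by ring
    have h1 : (L + 2 + s) ^ (n+1) - (L + 2 - s) ^ (n+1) ≠ 0 := (hψpos (n+1) (by omega)).ne'
    have h2 : (L + 2 + s) * (L + 2 + s) ^ (n+1) - (L + 2 - s) * (L + 2 - s) ^ (n+1) ≠ 0 := by
      have := hψpos (n+2) (by omega); rw [ec, ec] at this; exact this.ne'
    have h3 : (L + 2 + s) ^ 2 * (L + 2 + s) ^ (n+1) - (L + 2 - s) ^ 2 * (L + 2 - s) ^ (n+1) ≠ 0 := by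
      have := hψpos (n+1+2) (by omega); rw [ea, ea] at this; exact this.ne'
    have d1 : L * ((L + 2 + s) ^ (n+1) - (L + 2 - s) ^ (n+1)) +
        s * ((L + 2 + s) ^ (n+1) + (L + 2 - s) ^ (n+1)) ≠ 0 := (hDpos (n+1)).ne'
    have d2 : L * ((L + 2 + s) * (L + 2 + s) ^ (n+1) - (L + 2 - s) * (L + 2 - s) ^ (n+1)) +
        s * ((L + 2 + s) * (L + 2 + s) ^ (n+1) + (L + 2 - s) * (L + 2 - s) ^ (n+1)) ≠ 0 := by
      have := hDpos (n+2); rw [ec, ec] at this; exact this.ne'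
    simp only [ea, eb, ec]
    exact key_step L s ((L + 2 + s) ^ (n+1)) ((L + 2 - s) ^ (n+1)) hs h1 h2 h3 d1 d2
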